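/- There exist parameter values (λ₂, λ₃, λ₄) = (-0.01, 0, 0.003) such that g(x; μ, λ₂, λ₃, λ₄) = φ(x;μ)·{1 + λ₂(x-μ)²-λ₂ + λ₄((x-μ)⁴ - 6(x-μ)² + 3)} is strictly positive for all x ∈ ℝ, yet its variance 1 + 2λ₂ = 0.98 is strictly less than the variance 1 of the unmixed normal model. -/

import Mathlib

open MeasureTheory Real

lemma integrable_pow_gauss (n : ℕ) :
    Integrable (fun x : ℝ => x ^ n * Real.exp (-x ^ 2 / 2)) := by
  have hI : Integrable (fun x : ℝ => ((1:ℝ) + 4 ^ n * ((Nat.factorial n : ℕ) : ℝ)) * Real.exp (-(4:ℝ)⁻¹ * x ^ 2)) :=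
    (integrable_exp_neg_mul_sq (by norm_num)).const_mul _
  refine hI.mono' (((continuous_pow n).mul (by fun_prop)).aestronglyMeasurable) ?_
  filter_upwards with x
  have hb : |x| ^ n ≤ 1 + 4 ^ n * ((Nat.factorial n : ℕ) : ℝ) * Real.exp (x ^ 2 / 4) := by
    have h2 : ((x ^ 2 / 4) ^ n : ℝ) ≤ ((Nat.factorial n : ℕ) : ℝ) * Real.exp (x ^ 2 / 4) := by
      have := Real.pow_div_factorial_le_exp (x := x ^ 2 / 4) (by positivity) n
      rw [div_le_iff₀ (by positivity : (0:ℝ) < ((Nat.factorial n : ℕ) : ℝ))] at this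
      linarith [this]
    have h3 : (x ^ 2) ^ n ≤ 4 ^ n * ((Nat.factorial n : ℕ) : ℝ) * Real.exp (x ^ 2 / 4) := by
      have : ((x ^ 2 / 4) ^ n : ℝ) = (x ^ 2) ^ n / 4 ^ n := by rw [div_pow]
      rw [this, div_le_iff₀ (by positivity : (0:ℝ) < 4 ^ n)] at h2
      calc (x ^ 2) ^ n ≤ ((Nat.factorial n : ℕ) : ℝ) * Real.exp (x ^ 2 / 4) * 4 ^ n := h2
        _ = 4 ^ n * ((Nat.factorial n : ℕ) : ℝ) * Real.exp (x ^ 2 / 4) := by ring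
    rcases le_total (|x|) 1 with h | h
    · have h1 : |x| ^ n ≤ 1 := pow_le_one₀ (abs_nonneg x) h
      have : (0:ℝ) ≤ 4 ^ n * ((Nat.factorial n : ℕ) : ℝ) * Real.exp (x ^ 2 / 4) := by positivity
      linarith
    · have h1 : |x| ^ n ≤ (|x| ^ 2) ^ n := by
        rw [← pow_mul]
        exact pow_le_pow_right₀ h (by omega)
      rw [sq_abs] at h1
      linarith
  have hexp : Real.exp (-x ^ 2 / 2) ≤ Real.exp (-(4:ℝ)⁻¹ * x ^ 2) :=
    Real.exp_le_exp.2 (by nlinarith [sq_nonneg x])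
  have hsplit : Real.exp (x ^ 2 / 4) * Real.exp (-x ^ 2 / 2) = Real.exp (-(4:ℝ)⁻¹ * x ^ 2) := by
    rw [← Real.exp_add]; ring_nf
  have he : (0:ℝ) < Real.exp (-x ^ 2 / 2) := Real.exp_pos _
  have hnorm : ‖x ^ n * Real.exp (-x ^ 2 / 2)‖ = |x| ^ n * Real.exp (-x ^ 2 / 2) := by
    rw [Real.norm_eq_abs, abs_mul, abs_pow, Real.abs_exp]
  rw [hnorm]
  calc |x| ^ n * Real.exp (-x ^ 2 / 2)
      ≤ (1 + 4 ^ n * ((Nat.factorial n : ℕ) : ℝ) * Real.exp (x ^ 2 / 4)) * Real.exp (-x ^ 2 / 2) := by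
        exact mul_le_mul_of_nonneg_right hb he.le
    _ = Real.exp (-x ^ 2 / 2) + 4 ^ n * ((Nat.factorial n : ℕ) : ℝ) * (Real.exp (x ^ 2 / 4) * Real.exp (-x ^ 2 / 2)) := by ring
    _ = Real.exp (-x ^ 2 / 2) + 4 ^ n * ((Nat.factorial n : ℕ) : ℝ) * Real.exp (-(4:ℝ)⁻¹ * x ^ 2) := by rw [hsplit]
    _ ≤ Real.exp (-(4:ℝ)⁻¹ * x ^ 2) + 4 ^ n * ((Nat.factorial n : ℕ) : ℝ) * Real.exp (-(4:ℝ)⁻¹ * x ^ 2) := by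
        have : (0:ℝ) ≤ 4 ^ n * ((Nat.factorial n : ℕ) : ℝ) := by positivity
        linarith
    _ = (1 + 4 ^ n * ((Nat.factorial n : ℕ) : ℝ)) * Real.exp (-(4:ℝ)⁻¹ * x ^ 2) := by ring

lemma gauss_moment_rec (n : ℕ) :
    (∫ x : ℝ, x ^ (n + 2) * Real.exp (-x ^ 2 / 2))
      = (n + 1) * ∫ x : ℝ, x ^ n * Real.exp (-x ^ 2 / 2) := by
  have hderiv : ∀ x : ℝ, HasDerivAt (fun x : ℝ => x ^ (n + 1) * Real.exp (-x ^ 2 / 2))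
      ((n + 1 : ℝ) * (x ^ n * Real.exp (-x ^ 2 / 2)) - x ^ (n + 2) * Real.exp (-x ^ 2 / 2)) x := by
    intro x
    have h1 : HasDerivAt (fun x : ℝ => x ^ (n + 1)) ((n + 1 : ℝ) * x ^ n) x := by
      simpa using hasDerivAt_pow (n + 1) x
    have h0 : HasDerivAt (fun x : ℝ => -x ^ 2 / 2) (-x) x := by
      have := (hasDerivAt_pow 2 x).neg.div_const 2
      convert this using 1
      all_goals (try rfl)
      ring
    have h2 : HasDerivAt (fun x : ℝ => Real.exp (-x ^ 2 / 2)) (Real.exp (-x ^ 2 / 2) * (-x)) x :=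
      (Real.hasDerivAt_exp _).comp x h0
    have := h1.mul h2
    convert this using 1
    all_goals (try rfl)
    ring
  have hint : Integrable (fun x : ℝ =>
      (n + 1 : ℝ) * (x ^ n * Real.exp (-x ^ 2 / 2)) - x ^ (n + 2) * Real.exp (-x ^ 2 / 2)) :=
    ((integrable_pow_gauss n).const_mul _).sub (integrable_pow_gauss (n + 2))
  have h0 := integral_eq_zero_of_hasDerivAt_of_integrable hderiv hint (integrable_pow_gauss (n + 1))
  rw [integral_sub ((integrable_pow_gauss n).const_mul _) (integrable_pow_gauss (n + 2)),
    integral_const_mul] at h0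
  linarith

lemma gauss_moment_zero : (∫ x : ℝ, Real.exp (-x ^ 2 / 2)) = Real.sqrt (2 * π) := by
  have := integral_gaussian (1 / 2)
  rw [show ((π : ℝ) / (1 / 2)) = 2 * π by ring] at this
  rw [← this]
  congr 1 with x
  ring_nf

lemma gauss_moment_two : (∫ x : ℝ, x ^ 2 * Real.exp (-x ^ 2 / 2)) = Real.sqrt (2 * π) := by
  have h := gauss_moment_rec 0
  simp only [pow_zero, one_mul, Nat.cast_zero, zero_add] at h
  rw [h, gauss_moment_zero]

lemma gauss_moment_four : (∫ x : ℝ, x ^ 4 * Real.exp (-x ^ 2 / 2)) = 3 * Real.sqrt (2 * π) := by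
  have h := gauss_moment_rec 2
  norm_num at h
  rw [h, gauss_moment_two]

lemma gauss_moment_six : (∫ x : ℝ, x ^ 6 * Real.exp (-x ^ 2 / 2)) = 15 * Real.sqrt (2 * π) := by
  have h := gauss_moment_rec 4
  norm_num at h
  rw [h, gauss_moment_four]
  ring

/-- With `(λ₂, λ₃, λ₄) = (-0.01, 0, 0.003)`, the order-4 local mixture of `N(μ,1)`,
`g(x) = φ(x;μ)·{1 + λ₂((x-μ)² - 1) + λ₄((x-μ)⁴ - 6(x-μ)² + 3)}`, is strictly
positive for all `x`, yet its variance `1 + 2λ₂ = 0.98` is strictly less than `1`. -/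
theorem normal_local_mixture_reduced_variance
    (μ : ℝ) (φ : ℝ → ℝ → ℝ)
    (hφ : ∀ x m, φ x m = Real.exp (-(x - m)^2 / 2) / Real.sqrt (2 * Real.pi))
    (l₂ l₄ : ℝ) (hl₂ : l₂ = -0.01) (hl₄ : l₄ = 0.003)
    (g : ℝ → ℝ)
    (hg : ∀ x, g x = φ x μ *
      (1 + l₂ * ((x - μ)^2 - 1) + l₄ * ((x - μ)^4 - 6*(x - μ)^2 + 3))) :
    (∀ x, 0 < g x) ∧ (∫ x, (x - μ)^2 * g x = 1 + 2 * l₂) ∧ 1 + 2 * l₂ < 1 := by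
  have hsπ : (0:ℝ) < Real.sqrt (2 * π) := Real.sqrt_pos.2 (by positivity)
  refine ⟨?_, ?_, by rw [hl₂]; norm_num⟩
  · intro x
    rw [hg, hφ]
    have hpos : 0 < 1 + l₂ * ((x - μ)^2 - 1) + l₄ * ((x - μ)^4 - 6*(x - μ)^2 + 3) := by
      rw [hl₂, hl₄]
      nlinarith [sq_nonneg ((x - μ)^2 - 14/3), sq_nonneg (x - μ)]
    positivity
  · set F : ℝ → ℝ := fun z =>
      ((1 - l₂ + 3*l₄) * (z ^ 2 * Real.exp (-z ^ 2 / 2))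
        + (l₂ - 6*l₄) * (z ^ 4 * Real.exp (-z ^ 2 / 2))
        + l₄ * (z ^ 6 * Real.exp (-z ^ 2 / 2))) / Real.sqrt (2 * π) with hF
    have key : ∀ x : ℝ, (x - μ)^2 * g x = F (x - μ) := by
      intro x
      rw [hg, hφ, hF]
      have h2 : -(x - μ) ^ 2 / 2 = -(x-μ)^2/2 := rfl
      field_simp
      ring
    have h1 : (∫ x, (x - μ)^2 * g x) = ∫ x, F (x - μ) := by
      exact integral_congr_ae (Filter.Eventually.of_forall key)
    rw [h1, integral_sub_right_eq_self F μ]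
    have hi2 := (integrable_pow_gauss 2).const_mul (1 - l₂ + 3*l₄)
    have hi4 := (integrable_pow_gauss 4).const_mul (l₂ - 6*l₄)
    have hi6 := (integrable_pow_gauss 6).const_mul l₄
    calc (∫ z, F z)
        = (∫ z, ((1 - l₂ + 3*l₄) * (z ^ 2 * Real.exp (-z ^ 2 / 2))
            + (l₂ - 6*l₄) * (z ^ 4 * Real.exp (-z ^ 2 / 2))
            + l₄ * (z ^ 6 * Real.exp (-z ^ 2 / 2)))) / Real.sqrt (2 * π) := by
          rw [hF, integral_div]
      _ = ((1 - l₂ + 3*l₄) * (∫ z : ℝ, z ^ 2 * Real.exp (-z ^ 2 / 2))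
            + (l₂ - 6*l₄) * (∫ z : ℝ, z ^ 4 * Real.exp (-z ^ 2 / 2))
            + l₄ * (∫ z : ℝ, z ^ 6 * Real.exp (-z ^ 2 / 2))) / Real.sqrt (2 * π) := by
          have hb := integral_add (hi2.add hi4) hi6
          have ha := integral_add hi2 hi4
          simp only [Pi.add_apply] at hb
          rw [hb, ha, integral_const_mul, integral_const_mul, integral_const_mul]
      _ = 1 + 2 * l₂ := by
          rw [gauss_moment_two, gauss_moment_four, gauss_moment_six]
          field_simp
          ring
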